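/- Let n ≥ 1 and N = 2n, let λ : Fin N → ℂ, and let W : Fin N → (Fin 2 →₀ ℕ) → ℂ, R : Fin 2 → (Fin 2 →₀ ℕ) → ℂ, G : Fin N → (Fin 2 →₀ ℕ) → ℂ be coefficient families, where W and R satisfy the tangency normalizations. Fix i ∈ Fin N and a multi-index k : Fin 2 →₀ ℕ with k 0 + k 1 ≥ 2. Then the k-th coefficient equation of row i of the autonomous invariance equation, namely λ i · W i k + G i k = ∑_{j ∈ Fin 2} ∑_{(m,n) ∈ antidiagonal (k + e_j), m j > 0} (m j) · (W i m) · (R j n), holds if and only if (λ i − ∑_{j ∈ Fin 2} (k j) · λ j) · W i k = (if i < 2 then R i k else 0) + Q i k, where Q i k := ∑_{j ∈ Fin 2} ∑_{(m,n) ∈ antidiagonal (k + e_j), m j > 0, m ≠ e_j, m ≠ k} (m j) · (W i m) · (R j n) − G i k. -/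

import Mathlib

open Finset

lemma split_sum_aux (f : (Fin 2 →₀ ℕ) × (Fin 2 →₀ ℕ) → ℂ) (k : Fin 2 →₀ ℕ) (j : Fin 2)
    (hek : Finsupp.single j 1 ≠ k) :
    ∑ p ∈ (Finset.HasAntidiagonal.antidiagonal (k + Finsupp.single j 1)).filter
        (fun p : (Fin 2 →₀ ℕ) × (Fin 2 →₀ ℕ) => 0 < p.1 j), f p
    = f (Finsupp.single j 1, k)
      + (if 0 < k j then f (k, Finsupp.single j 1) else 0)
      + ∑ p ∈ (Finset.HasAntidiagonal.antidiagonal (k + Finsupp.single j 1)).filter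
          (fun p : (Fin 2 →₀ ℕ) × (Fin 2 →₀ ℕ) =>
            0 < p.1 j ∧ p.1 ≠ Finsupp.single j 1 ∧ p.1 ≠ k), f p := by
  classical
  set e : Fin 2 →₀ ℕ := Finsupp.single j 1 with he
  set rest := (Finset.HasAntidiagonal.antidiagonal (k + e)).filter
      (fun p : (Fin 2 →₀ ℕ) × (Fin 2 →₀ ℕ) => 0 < p.1 j ∧ p.1 ≠ e ∧ p.1 ≠ k) with hrest
  have hcancel1 : ∀ p : (Fin 2 →₀ ℕ) × (Fin 2 →₀ ℕ), p.1 + p.2 = k + e → p.1 = e → p.2 = k := by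
    intro p hsum h1
    rw [h1, add_comm k] at hsum
    exact add_left_cancel hsum
  have hcancel2 : ∀ p : (Fin 2 →₀ ℕ) × (Fin 2 →₀ ℕ), p.1 + p.2 = k + e → p.1 = k → p.2 = e := by
    intro p hsum h1
    rw [h1] at hsum
    exact add_left_cancel hsum
  have hej : e j = 1 := Finsupp.single_eq_same
  by_cases hkj : 0 < k j
  · have hset : (Finset.HasAntidiagonal.antidiagonal (k + e)).filter
        (fun p : (Fin 2 →₀ ℕ) × (Fin 2 →₀ ℕ) => 0 < p.1 j)
        = insert (e, k) (insert (k, e) rest) := by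
      ext p
      simp only [Finset.mem_filter, Finset.HasAntidiagonal.mem_antidiagonal, Finset.mem_insert, hrest,
        Prod.ext_iff]
      constructor
      · rintro ⟨hsum, hpos⟩
        by_cases h1 : p.1 = e
        · exact Or.inl ⟨h1, hcancel1 p hsum h1⟩
        by_cases h2 : p.1 = k
        · exact Or.inr (Or.inl ⟨h2, hcancel2 p hsum h2⟩)
        · exact Or.inr (Or.inr ⟨hsum, hpos, h1, h2⟩)
      · rintro (⟨h1, h2⟩ | ⟨h1, h2⟩ | ⟨hsum, hpos, _, _⟩)
        · refine ⟨?_, ?_⟩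
          · rw [h1, h2, add_comm]
          · rw [h1, hej]; norm_num
        · exact ⟨by rw [h1, h2], by rw [h1]; exact hkj⟩
        · exact ⟨hsum, hpos⟩
    rw [hset, Finset.sum_insert, Finset.sum_insert, if_pos hkj]
    · ring
    · simp only [hrest, Finset.mem_filter]
      rintro ⟨-, -, -, h⟩
      exact h rfl
    · simp only [Finset.mem_insert, hrest, Finset.mem_filter, Prod.ext_iff]
      rintro (⟨h1, -⟩ | ⟨-, -, h1, -⟩)
      · exact hek h1
      · exact h1 rfl
  · have hset : (Finset.HasAntidiagonal.antidiagonal (k + e)).filter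
        (fun p : (Fin 2 →₀ ℕ) × (Fin 2 →₀ ℕ) => 0 < p.1 j)
        = insert (e, k) rest := by
      ext p
      simp only [Finset.mem_filter, Finset.HasAntidiagonal.mem_antidiagonal, Finset.mem_insert, hrest,
        Prod.ext_iff]
      constructor
      · rintro ⟨hsum, hpos⟩
        by_cases h1 : p.1 = e
        · exact Or.inl ⟨h1, hcancel1 p hsum h1⟩
        · refine Or.inr ⟨hsum, hpos, h1, fun h2 => ?_⟩
          rw [h2] at hpos
          exact hkj hpos
      · rintro (⟨h1, h2⟩ | ⟨hsum, hpos, _, _⟩)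
        · refine ⟨?_, ?_⟩
          · rw [h1, h2, add_comm]
          · rw [h1, hej]; norm_num
        · exact ⟨hsum, hpos⟩
    rw [hset, Finset.sum_insert, if_neg hkj]
    · ring
    · simp only [hrest, Finset.mem_filter]
      rintro ⟨-, -, h, -⟩
      exact h rfl

/-- The `k`-th coefficient equation of row `i` of the autonomous invariance equation for the
SSM parameterization `W` with reduced dynamics `R` and nonlinearity coefficients `G`. -/
theorem autonomous_coefficient_equation
    (n : ℕ) (hn : 1 ≤ n) (N : ℕ) (hN : N = 2 * n)
    (lam : Fin N → ℂ)
    (W : Fin N → (Fin 2 →₀ ℕ) → ℂ)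
    (R : Fin 2 → (Fin 2 →₀ ℕ) → ℂ)
    (G : Fin N → (Fin 2 →₀ ℕ) → ℂ)
    (hW0 : ∀ i, W i 0 = 0)
    (hW1 : ∀ i (j : Fin 2), W i (Finsupp.single j 1) = if (i : ℕ) = (j : ℕ) then 1 else 0)
    (hR0 : ∀ j, R j 0 = 0)
    (hR1 : ∀ j l : Fin 2,
      R j (Finsupp.single l 1) = if j = l then lam (Fin.castLE (by omega) j) else 0)
    (i : Fin N) (k : Fin 2 →₀ ℕ) (hk : 2 ≤ k 0 + k 1) :
    (lam i * W i k + G i k =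
      ∑ j : Fin 2,
        ∑ p ∈ (Finset.HasAntidiagonal.antidiagonal (k + Finsupp.single j 1)).filter (fun p : (Fin 2 →₀ ℕ) × (Fin 2 →₀ ℕ) => 0 < p.1 j),
          (p.1 j : ℂ) * W i p.1 * R j p.2)
    ↔
    ((lam i - ∑ j : Fin 2, (k j : ℂ) * lam (Fin.castLE (by omega) j)) * W i k =
      (if h : (i : ℕ) < 2 then R ⟨i, h⟩ k else 0) +
      ((∑ j : Fin 2,
          ∑ p ∈ (Finset.HasAntidiagonal.antidiagonal (k + Finsupp.single j 1)).filter
              (fun p : (Fin 2 →₀ ℕ) × (Fin 2 →₀ ℕ) => 0 < p.1 j ∧ p.1 ≠ Finsupp.single j 1 ∧ p.1 ≠ k),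
            (p.1 j : ℂ) * W i p.1 * R j p.2) - G i k)) := by
  classical
  have hek : ∀ j : Fin 2, Finsupp.single j 1 ≠ k := by
    intro j heq
    have h0 : (Finsupp.single j 1) 0 + (Finsupp.single j 1) 1 = k 0 + k 1 := by rw [heq]
    fin_cases j <;> simp [Finsupp.single_apply] at h0 <;> omega
  have key : ∀ j : Fin 2,
      ∑ p ∈ (Finset.HasAntidiagonal.antidiagonal (k + Finsupp.single j 1)).filter
          (fun p : (Fin 2 →₀ ℕ) × (Fin 2 →₀ ℕ) => 0 < p.1 j),
        (p.1 j : ℂ) * W i p.1 * R j p.2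
      = (if (i : ℕ) = (j : ℕ) then 1 else 0) * R j k
        + (k j : ℂ) * W i k * lam (Fin.castLE (by omega) j)
        + ∑ p ∈ (Finset.HasAntidiagonal.antidiagonal (k + Finsupp.single j 1)).filter
            (fun p : (Fin 2 →₀ ℕ) × (Fin 2 →₀ ℕ) =>
              0 < p.1 j ∧ p.1 ≠ Finsupp.single j 1 ∧ p.1 ≠ k),
          (p.1 j : ℂ) * W i p.1 * R j p.2 := by
    intro j
    rw [split_sum_aux (fun p => (p.1 j : ℂ) * W i p.1 * R j p.2) k j (hek j)]
    congr 2
    · simp [Finsupp.single_eq_same, hW1]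
    · rw [hR1 j j, if_pos rfl]
      by_cases h : 0 < k j
      · rw [if_pos h]
      · rw [if_neg h]
        have hz : k j = 0 := by omega
        simp [hz]
  have hdelta : (∑ j : Fin 2, (if (i : ℕ) = (j : ℕ) then (1 : ℂ) else 0) * R j k)
      = (if h : (i : ℕ) < 2 then R ⟨i, h⟩ k else 0) := by
    rw [Fin.sum_univ_two]
    rcases Nat.lt_or_ge (i : ℕ) 2 with h | h
    · rw [dif_pos h]
      have : (i : ℕ) = 0 ∨ (i : ℕ) = 1 := by omega
      rcases this with h0 | h0
      · have hi : (⟨(i : ℕ), h⟩ : Fin 2) = 0 := by ext; simp [h0]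
        rw [hi]
        simp [h0]
      · have hi : (⟨(i : ℕ), h⟩ : Fin 2) = 1 := by ext; simp [h0]
        rw [hi]
        simp [h0]
    · rw [dif_neg (by omega)]
      have h0 : ¬ (i : ℕ) = ((0 : Fin 2) : ℕ) := by simp; omega
      have h1 : ¬ (i : ℕ) = ((1 : Fin 2) : ℕ) := by simp; omega
      rw [if_neg h0, if_neg h1]
      ring
  simp only [key]
  rw [Finset.sum_add_distrib, Finset.sum_add_distrib, hdelta]
  rw [Fin.sum_univ_two ((fun j => (k j : ℂ) * W i k * lam (Fin.castLE (by omega) j))),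
    Fin.sum_univ_two ((fun j => (k j : ℂ) * lam (Fin.castLE (by omega) j)))]
  constructor <;> intro h <;> linear_combination h
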